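/- For t₀ > 0 and x₀ > 0, the function u(t) = t₀x₀ / (t·(t₀x₀·arctanh(√3/√(2t²+3)) - t₀x₀·arctanh(√3/√(2t₀²+3)) - 1)) solves the Riccati initial value problem du/dt = u·(√3/√(2t²+3)·u - 1/t), u(t₀) = x₀, on any interval containing t₀ on which the denominator is nonzero. -/

import Mathlib

/-- The inverse hyperbolic tangent, `arctanh x = (1/2)·log((1+x)/(1-x))`. -/
noncomputable def arctanh (x : ℝ) : ℝ := (1 / 2) * Real.log ((1 + x) / (1 - x))

/-- The explicit solution of the Riccati comparison equation with value `x₀` at time `t₀`. -/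
noncomputable def riccatiU (t₀ x₀ t : ℝ) : ℝ :=
  t₀ * x₀ /
    (t * (t₀ * x₀ * arctanh (Real.sqrt 3 / Real.sqrt (2 * t ^ 2 + 3)) -
      t₀ * x₀ * arctanh (Real.sqrt 3 / Real.sqrt (2 * t₀ ^ 2 + 3)) + 1))


private lemma arctanh_deriv (t : ℝ) (ht : 0 < t) :
    HasDerivAt (fun t => arctanh (Real.sqrt 3 / Real.sqrt (2 * t ^ 2 + 3)))
      (-(Real.sqrt 3 / Real.sqrt (2 * t ^ 2 + 3)) / t) t := by
  set σ := Real.sqrt (2 * t ^ 2 + 3) with hσdef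
  have hpos : (0:ℝ) < 2 * t ^ 2 + 3 := by positivity
  have hσpos : 0 < σ := Real.sqrt_pos.mpr hpos
  have hσsq : σ ^ 2 = 2 * t ^ 2 + 3 := Real.sq_sqrt hpos.le
  have h3 : Real.sqrt 3 ^ 2 = 3 := Real.sq_sqrt (by norm_num)
  have h3pos : 0 < Real.sqrt 3 := Real.sqrt_pos.mpr (by norm_num)
  have hlt : Real.sqrt 3 < σ := by
    apply Real.sqrt_lt_sqrt (by norm_num)
    nlinarith
  set g := Real.sqrt 3 / σ with hgdef
  have hg0 : 0 < g := div_pos h3pos hσpos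
  have hg1 : g < 1 := (div_lt_one hσpos).mpr hlt
  have h1 : HasDerivAt (fun t : ℝ => 2 * t ^ 2 + 3) (4 * t) t := by
    have := ((hasDerivAt_pow 2 t).const_mul 2).add_const 3
    exact this.congr_deriv (by norm_num; ring)
  have h2 : HasDerivAt (fun t : ℝ => Real.sqrt (2 * t ^ 2 + 3)) (4 * t / (2 * σ)) t :=
    h1.sqrt hpos.ne'
  have h2' : HasDerivAt (fun t : ℝ => Real.sqrt 3 / Real.sqrt (2 * t ^ 2 + 3))
      ((0 * σ - Real.sqrt 3 * (4 * t / (2 * σ))) / σ ^ 2) t :=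
    (hasDerivAt_const t (Real.sqrt 3)).div h2 hσpos.ne'
  set g' := (0 * σ - Real.sqrt 3 * (4 * t / (2 * σ))) / σ ^ 2 with hg'def
  have hg' : g' = -(2 * Real.sqrt 3 * t) / σ ^ 3 := by
    rw [hg'def]; field_simp; ring
  have hN : HasDerivAt (fun t : ℝ => 1 + Real.sqrt 3 / Real.sqrt (2 * t ^ 2 + 3)) g' t := by
    exact h2'.const_add 1
  have hD : HasDerivAt (fun t : ℝ => 1 - Real.sqrt 3 / Real.sqrt (2 * t ^ 2 + 3)) (-g') t := by
    exact h2'.const_sub 1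
  have hDne : 1 - g ≠ 0 := by linarith
  have hNne : 1 + g ≠ 0 := by linarith
  have hq : HasDerivAt (fun t : ℝ => (1 + Real.sqrt 3 / Real.sqrt (2 * t ^ 2 + 3)) /
      (1 - Real.sqrt 3 / Real.sqrt (2 * t ^ 2 + 3)))
      ((g' * (1 - g) - (1 + g) * (-g')) / (1 - g) ^ 2) t := hN.div hD hDne
  have hqne : (1 + g) / (1 - g) ≠ 0 := div_ne_zero hNne hDne
  have hlog := (hq.log hqne).const_mul (1/2 : ℝ)
  have main : HasDerivAt (fun t => arctanh (Real.sqrt 3 / Real.sqrt (2 * t ^ 2 + 3)))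
      (1/2 * ((g' * (1 - g) - (1 + g) * (-g')) / (1 - g) ^ 2 / ((1 + g) / (1 - g)))) t := hlog
  convert main using 1
  have key : 1/2 * ((g' * (1 - g) - (1 + g) * (-g')) / (1 - g) ^ 2 / ((1 + g) / (1 - g)))
      = g' / (1 - g ^ 2) := by
    have h1g : (1 : ℝ) - g ^ 2 = (1 - g) * (1 + g) := by ring
    rw [h1g]; field_simp; ring
  rw [key, hg']
  have h1g2 : (1 : ℝ) - g ^ 2 = 2 * t ^ 2 / σ ^ 2 := by
    rw [hgdef, div_pow, h3, hσsq]; field_simp; ring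
  rw [h1g2]
  rw [div_div_div_comm]
  rw [show σ ^ 3 = σ ^ 2 * σ by ring]
  rw [show -(2 * Real.sqrt 3 * t) / (2 * t ^ 2) = -(Real.sqrt 3 / t) by
    rw [neg_div, neg_inj, div_eq_div_iff (by positivity) ht.ne']; ring]
  rw [show σ ^ 2 * σ / σ ^ 2 = σ by rw [mul_div_assoc]; field_simp]
  rw [neg_div, neg_div, neg_inj, div_div, mul_comm σ t, ← div_div]

/-- The function `u(t) = t₀x₀/(t(t₀x₀·arctanh(√3/√(2t²+3)) - t₀x₀·arctanh(√3/√(2t₀²+3)) + 1))`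
solves the Riccati initial value problem `du/dt = u(√3/√(2t²+3)·u - 1/t)`, `u(t₀) = x₀`,
wherever its denominator does not vanish. -/
theorem riccati_explicit_solution (t₀ x₀ : ℝ) (ht₀ : 0 < t₀) (hx₀ : 0 < x₀) :
    riccatiU t₀ x₀ t₀ = x₀ ∧
    ∀ t > (0 : ℝ),
      t * (t₀ * x₀ * arctanh (Real.sqrt 3 / Real.sqrt (2 * t ^ 2 + 3)) -
        t₀ * x₀ * arctanh (Real.sqrt 3 / Real.sqrt (2 * t₀ ^ 2 + 3)) + 1) ≠ 0 →
      HasDerivAt (riccatiU t₀ x₀)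
        (riccatiU t₀ x₀ t * (Real.sqrt 3 / Real.sqrt (2 * t ^ 2 + 3) * riccatiU t₀ x₀ t - 1 / t)) t := by
  constructor
  · rw [riccatiU, sub_self, zero_add, mul_one, mul_comm t₀ x₀,
      mul_div_assoc, div_self ht₀.ne', mul_one]
  · intro t ht hne
    set c := t₀ * x₀ with hc
    set A₀ := arctanh (Real.sqrt 3 / Real.sqrt (2 * t₀ ^ 2 + 3)) with hA₀
    set g := Real.sqrt 3 / Real.sqrt (2 * t ^ 2 + 3) with hg
    set E := c * arctanh (Real.sqrt 3 / Real.sqrt (2 * t ^ 2 + 3)) - c * A₀ + 1 with hE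
    have hEne : E ≠ 0 := by
      intro h; apply hne; rw [h, mul_zero]
    have hA := arctanh_deriv t ht
    have hEdiv : HasDerivAt
        (fun t => c * arctanh (Real.sqrt 3 / Real.sqrt (2 * t ^ 2 + 3)) - c * A₀ + 1)
        (c * (-g / t)) t := ((hA.const_mul c).sub_const (c * A₀)).add_const 1
    have hD : HasDerivAt
        (fun t => t * (c * arctanh (Real.sqrt 3 / Real.sqrt (2 * t ^ 2 + 3)) - c * A₀ + 1))
        (1 * E + t * (c * (-g / t))) t := (hasDerivAt_id t).mul hEdiv
    have hu : HasDerivAt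
        (fun t => c / (t * (c * arctanh (Real.sqrt 3 / Real.sqrt (2 * t ^ 2 + 3)) - c * A₀ + 1)))
        ((0 * (t * E) - c * (1 * E + t * (c * (-g / t)))) / (t * E) ^ 2) t :=
      (hasDerivAt_const t c).div hD hne
    have hfun : riccatiU t₀ x₀ =
        fun t => c / (t * (c * arctanh (Real.sqrt 3 / Real.sqrt (2 * t ^ 2 + 3)) - c * A₀ + 1)) := by
      funext s; rw [riccatiU]
    rw [hfun]
    convert hu using 1
    show c / (t * E) * (g * (c / (t * E)) - 1 / t) = _
    field_simp
    ring
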